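/- Let a1, a2, a3, b1, b2, b3 : [0,∞) → R be differentiable, with a1 > 0, a1+2t·b1 > 0, satisfying a1·a2 = 1+a3² and (a1+2t·b1)(a2+2t·b2) = 1+(a3+2t·b3)² for all t. Let c ∈ R and suppose a1′ = (a1·b1 + c(1−3a3²−4t·a3·b3))/(a1+2t·b1), a3′ = (a1·b3 − 2c·a2·(a3+t·b3))/(a1+2t·b1), a2′ = (2a3·b3 − a2·b1 − c·a2²)/(a1+2t·b1) for all t. Then at t = 0: c = (a1(0)/a2(0)²)·(b2(0) − a2′(0)). -/

import Mathlib

theorem stmt_19 (a1 a2 a3 b1 b2 b3 : ℝ → ℝ)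
    (hd1 : DifferentiableOn ℝ a1 (Set.Ici 0))
    (hd2 : DifferentiableOn ℝ a2 (Set.Ici 0))
    (hd3 : DifferentiableOn ℝ a3 (Set.Ici 0))
    (hd4 : DifferentiableOn ℝ b1 (Set.Ici 0))
    (hd5 : DifferentiableOn ℝ b2 (Set.Ici 0))
    (hd6 : DifferentiableOn ℝ b3 (Set.Ici 0))
    (hpos1 : ∀ t ∈ Set.Ici (0:ℝ), 0 < a1 t)
    (hpos2 : ∀ t ∈ Set.Ici (0:ℝ), 0 < a1 t + 2 * t * b1 t)
    (halg1 : ∀ t ∈ Set.Ici (0:ℝ), a1 t * a2 t = 1 + a3 t ^ 2)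
    (halg2 : ∀ t ∈ Set.Ici (0:ℝ),
      (a1 t + 2 * t * b1 t) * (a2 t + 2 * t * b2 t) = 1 + (a3 t + 2 * t * b3 t) ^ 2)
    (c : ℝ)
    (hode1 : ∀ t ∈ Set.Ici (0:ℝ), derivWithin a1 (Set.Ici 0) t =
      (a1 t * b1 t + c * (1 - 3 * a3 t ^ 2 - 4 * t * a3 t * b3 t)) /
        (a1 t + 2 * t * b1 t))
    (hode3 : ∀ t ∈ Set.Ici (0:ℝ), derivWithin a3 (Set.Ici 0) t =
      (a1 t * b3 t - 2 * c * a2 t * (a3 t + t * b3 t)) / (a1 t + 2 * t * b1 t))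
    (hode2 : ∀ t ∈ Set.Ici (0:ℝ), derivWithin a2 (Set.Ici 0) t =
      (2 * a3 t * b3 t - a2 t * b1 t - c * a2 t ^ 2) / (a1 t + 2 * t * b1 t)) :
    c = a1 0 / a2 0 ^ 2 * (b2 0 - derivWithin a2 (Set.Ici 0) 0) := by
  set s := Set.Ici (0:ℝ) with hs
  have h0 : (0:ℝ) ∈ s := Set.self_mem_Ici
  have hu : UniqueDiffWithinAt ℝ s 0 := uniqueDiffOn_Ici 0 0 Set.self_mem_Ici
  have H1 := ((hd1 0 h0).hasDerivWithinAt)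
  have H2 := ((hd2 0 h0).hasDerivWithinAt)
  have H3 := ((hd3 0 h0).hasDerivWithinAt)
  have H4 := ((hd4 0 h0).hasDerivWithinAt)
  have H5 := ((hd5 0 h0).hasDerivWithinAt)
  have H6 := ((hd6 0 h0).hasDerivWithinAt)
  have Hid : HasDerivWithinAt (fun t : ℝ => 2 * t) 2 s 0 := by
    simpa using ((hasDerivWithinAt_id (0:ℝ) s).const_mul (2:ℝ))
  have HL : HasDerivWithinAt (fun t => a1 t + 2 * t * b1 t)
      (derivWithin a1 s 0 + (2 * b1 0 + 2 * 0 * derivWithin b1 s 0)) s 0 :=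
    H1.add (Hid.mul H4)
  have HR : HasDerivWithinAt (fun t => a2 t + 2 * t * b2 t)
      (derivWithin a2 s 0 + (2 * b2 0 + 2 * 0 * derivWithin b2 s 0)) s 0 :=
    H2.add (Hid.mul H5)
  have HQ : HasDerivWithinAt (fun t => a3 t + 2 * t * b3 t)
      (derivWithin a3 s 0 + (2 * b3 0 + 2 * 0 * derivWithin b3 s 0)) s 0 :=
    H3.add (Hid.mul H6)
  have HQ2 := HQ.pow 2
  have HF : HasDerivWithinAt
      (fun t => (a1 t + 2 * t * b1 t) * (a2 t + 2 * t * b2 t) -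
        (1 + (a3 t + 2 * t * b3 t) ^ 2))
      ((derivWithin a1 s 0 + (2 * b1 0 + 2 * 0 * derivWithin b1 s 0)) *
          (a2 0 + 2 * 0 * b2 0) +
        (a1 0 + 2 * 0 * b1 0) *
          (derivWithin a2 s 0 + (2 * b2 0 + 2 * 0 * derivWithin b2 s 0)) -
        (0 + 2 * (a3 0 + 2 * 0 * b3 0) ^ (2 - 1) *
          (derivWithin a3 s 0 + (2 * b3 0 + 2 * 0 * derivWithin b3 s 0)))) s 0 :=
    (HL.mul HR).sub ((hasDerivWithinAt_const (0:ℝ) s (1:ℝ)).add HQ2)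
  have HF0 : HasDerivWithinAt
      (fun t => (a1 t + 2 * t * b1 t) * (a2 t + 2 * t * b2 t) -
        (1 + (a3 t + 2 * t * b3 t) ^ 2)) 0 s 0 := by
    refine (hasDerivWithinAt_const (0:ℝ) s (0:ℝ)).congr (fun t ht => ?_) ?_
    · have := halg2 t ht; linarith
    · have := halg2 0 h0; linarith
  have hkey : (derivWithin a1 s 0 + (2 * b1 0 + 2 * 0 * derivWithin b1 s 0)) *
          (a2 0 + 2 * 0 * b2 0) +
        (a1 0 + 2 * 0 * b1 0) *
          (derivWithin a2 s 0 + (2 * b2 0 + 2 * 0 * derivWithin b2 s 0)) -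
        (0 + 2 * (a3 0 + 2 * 0 * b3 0) ^ (2 - 1) *
          (derivWithin a3 s 0 + (2 * b3 0 + 2 * 0 * derivWithin b3 s 0))) = 0 := by
    exact (HF.derivWithin hu).symm.trans (HF0.derivWithin hu)
  have e1 := hode1 0 h0
  have e2 := hode2 0 h0
  have e3 := hode3 0 h0
  have ha1 : 0 < a1 0 := hpos1 0 h0
  have halg : a1 0 * a2 0 = 1 + a3 0 ^ 2 := halg1 0 h0
  have ha2 : 0 < a2 0 := by nlinarith [sq_nonneg (a3 0)]
  simp only [mul_zero, zero_mul, mul_one, add_zero, zero_add] at e1 e2 e3 hkey ⊢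
  rw [e1, e3, e2] at hkey
  rw [e2]
  have ha1' : a1 0 ≠ 0 := ne_of_gt ha1
  have ha2' : a2 0 ≠ 0 := ne_of_gt ha2
  field_simp at hkey ⊢
  have hE : a1 0 * b2 0 + a2 0 * b1 0 - 2 * a3 0 * b3 0 = 0 := by
    have hm : a1 0 * (a1 0 * b2 0 + a2 0 * b1 0 - 2 * a3 0 * b3 0) = 0 := by
      linear_combination (1/2) * hkey + (c * a2 0 / 2) * halg
    exact (mul_eq_zero.mp hm).resolve_left ha1'
  linear_combination (-1) * hE
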